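/- In a Clifford algebra with n ≤ 3 generators and nondegenerate form, any invertible T with reverse(T)·T ∈ Z^× satisfies T C^1 T^{-1} ⊆ C^1; thus A ⊆ Γ (and hence A = Q = P) for n ≤ 3. -/

import Mathlib

open CliffordAlgebra

noncomputable section

variable {n : ℕ} (Q : QuadraticForm ℝ (Fin n → ℝ))

/-- The standard generators `e_a` of the Clifford algebra. -/
def egen (a : Fin n) : CliffordAlgebra Q := ι Q (Pi.single a 1)

/-- The ordered product of generators indexed by a finite set. -/
def eProd (s : Finset (Fin n)) : CliffordAlgebra Q :=
  ((s.sort (· ≤ ·)).map (egen Q)).prod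

/-- The grade-`k` subspace `C^k`, spanned by the products of `k` distinct generators. -/
def gradeSubmodule (k : ℕ) : Submodule ℝ (CliffordAlgebra Q) :=
  Submodule.span ℝ {x | ∃ s : Finset (Fin n), s.card = k ∧ x = eProd Q s}

/-- The set `Z^× (C^{×(0)} ∪ C^{×(1)})` : invertible central elements times
invertible even or odd elements. -/
def Pset : Set (CliffordAlgebra Q) :=
  {T | ∃ W T₀ : CliffordAlgebra Q,
    W ∈ Subalgebra.center ℝ (CliffordAlgebra Q) ∧ IsUnit W ∧
    (T₀ ∈ evenOdd Q 0 ∨ T₀ ∈ evenOdd Q 1) ∧ IsUnit T₀ ∧ T = W * T₀}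

/-- `Q` is diagonal with entries `±1` in the standard basis (an orthonormal-type basis,
expressing nondegeneracy of `Q`). -/
def DiagQ : Prop :=
  (∀ a, Q (Pi.single a 1) = 1 ∨ Q (Pi.single a 1) = -1) ∧
  (∀ a b : Fin n, a ≠ b → QuadraticMap.polar Q (Pi.single a 1) (Pi.single b 1) = 0)

namespace Stmt18Aux

variable {n : ℕ} {Q : QuadraticForm ℝ (Fin n → ℝ)}

lemma egen_sq (a : Fin n) :
    egen Q a * egen Q a = algebraMap ℝ _ (Q (Pi.single a 1)) :=
  ι_sq_scalar Q _

lemma egen_swap (hQ : DiagQ Q) {a b : Fin n} (h : a ≠ b) :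
    egen Q b * egen Q a = -(egen Q a * egen Q b) := by
  have h1 := ι_mul_ι_add_swap (Q := Q) (Pi.single a 1) (Pi.single b 1)
  rw [hQ.2 a b h, map_zero] at h1
  have h1' : egen Q b * egen Q a + egen Q a * egen Q b = 0 := by
    rw [add_comm]; exact h1
  exact eq_neg_of_add_eq_zero_left h1'

lemma eProd_empty : eProd Q ∅ = 1 := by
  simp [eProd, Finset.sort_empty]

lemma eProd_singleton (a : Fin n) : eProd Q {a} = egen Q a := by
  simp [eProd, Finset.sort_singleton]

lemma eProd_insert {a : Fin n} {s : Finset (Fin n)} (h : ∀ x ∈ s, a < x) :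
    eProd Q (insert a s) = egen Q a * eProd Q s := by
  have ha : a ∉ s := fun hs => lt_irrefl a (h a hs)
  rw [eProd, Finset.sort_insert (· ≤ ·) (fun b hb => (h b hb).le) ha]
  simp [eProd]

lemma prod_mul_egen (hQ : DiagQ Q) (a : Fin n) :
    ∀ (l : List (Fin n)), (∀ b ∈ l, b ≠ a) →
      (l.map (egen Q)).prod * egen Q a
        = ((-1 : ℝ) ^ l.length) • (egen Q a * (l.map (egen Q)).prod)
  | [], _ => by simp
  | b :: l, h => by
    have hb : b ≠ a := h b (by simp)
    have hl : ∀ c ∈ l, c ≠ a := fun c hc => h c (by simp [hc])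
    have ih := prod_mul_egen hQ a l hl
    simp only [List.map_cons, List.prod_cons, List.length_cons]
    rw [mul_assoc, ih, mul_smul_comm, ← mul_assoc, egen_swap hQ (fun e => hb e.symm),
      pow_succ]
    rw [neg_mul, smul_neg, mul_assoc]
    rw [mul_comm ((-1 : ℝ) ^ l.length) (-1 : ℝ), mul_smul, neg_one_smul]

lemma reverse_listProd (hQ : DiagQ Q) :
    ∀ (l : List (Fin n)), l.Nodup →
      reverse (Q := Q) ((l.map (egen Q)).prod)
        = ((-1 : ℝ) ^ (l.length.choose 2)) • (l.map (egen Q)).prod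
  | [], _ => by simp
  | a :: l, h => by
    obtain ⟨ha, hl⟩ := List.nodup_cons.mp h
    have ih := reverse_listProd hQ l hl
    simp only [List.map_cons, List.prod_cons, List.length_cons]
    rw [reverse.map_mul, ih, show reverse (Q := Q) (egen Q a) = egen Q a from reverse_ι _,
      smul_mul_assoc, prod_mul_egen hQ a l (fun b hb => fun e => ha (e ▸ hb)),
      smul_smul, Nat.choose_succ_succ, Nat.choose_one_right, pow_add,
      mul_comm ((-1 : ℝ) ^ l.length.choose 2) ((-1 : ℝ) ^ l.length)]

lemma reverse_eProd (hQ : DiagQ Q) (s : Finset (Fin n)) :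
    reverse (Q := Q) (eProd Q s) = ((-1 : ℝ) ^ (s.card.choose 2)) • eProd Q s := by
  have := reverse_listProd hQ (s.sort (· ≤ ·)) (Finset.sort_nodup s _)
  rwa [Finset.length_sort] at this

/-- moving a generator into an ordered product stays in the span of ordered products
indexed by subsets of `insert a t`. -/
lemma egen_mul_eProd_mem (hQ : DiagQ Q) :
    ∀ (k : ℕ) (t : Finset (Fin n)), t.card = k → ∀ a : Fin n,
      egen Q a * eProd Q t ∈
        Submodule.span ℝ {x | ∃ s : Finset (Fin n), s ⊆ insert a t ∧ x = eProd Q s}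
  | 0, t, ht, a => by
    rw [Finset.card_eq_zero.mp ht]
    refine Submodule.subset_span ⟨{a}, by simp, ?_⟩
    rw [eProd_empty, mul_one, eProd_singleton]
  | (k + 1), t, ht, a => by
    have hpos : 0 < t.card := by omega
    have hne : t.Nonempty := Finset.card_pos.mp hpos
    set b := t.min' hne with hbdef
    have hb : b ∈ t := t.min'_mem hne
    set t' := t.erase b with ht'def
    have ht' : t'.card = k := by
      rw [ht'def, Finset.card_erase_of_mem hb, ht]
      omega
    have hlt : ∀ x ∈ t', b < x := fun x hx => Finset.min'_lt_of_mem_erase_min' t hne hx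
    have htins : t = insert b t' := (Finset.insert_erase hb).symm
    have heq : eProd Q t = egen Q b * eProd Q t' := by
      rw [htins]; exact eProd_insert hlt
    rcases eq_or_ne a b with rfl | hab
    · -- a = b
      rw [heq, ← mul_assoc, egen_sq, ← Algebra.smul_def]
      exact Submodule.smul_mem _ _ (Submodule.subset_span
        ⟨t', fun x hx => Finset.mem_insert_of_mem (Finset.mem_of_mem_erase hx), rfl⟩)
    · rcases lt_or_gt_of_ne hab with hab' | hab'
      · -- a < b = min t, so a < everything in t
        have : ∀ x ∈ t, a < x := by
          intro x hx
          exact lt_of_lt_of_le hab' (t.min'_le x hx)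
        rw [← eProd_insert this]
        exact Submodule.subset_span ⟨insert a t, le_refl _, rfl⟩
      · -- b < a
        have ih := egen_mul_eProd_mem hQ k t' ht' a
        rw [heq, ← mul_assoc, egen_swap hQ (fun e => (ne_of_gt hab') e.symm),
          neg_mul, mul_assoc]
        refine Submodule.neg_mem _ ?_
        -- multiply the span membership by egen b on the left
        refine Submodule.span_induction
          (p := fun x _ => egen Q b * x ∈
            Submodule.span ℝ {x | ∃ s : Finset (Fin n), s ⊆ insert a t ∧ x = eProd Q s})
          ?_ (by simp) (fun x y _ _ hx hy => by simp only [mul_add]; exact add_mem hx hy)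
          (fun c x _ hx => by simp only [mul_smul_comm]; exact Submodule.smul_mem _ _ hx) ih
        rintro x ⟨s, hs, rfl⟩
        have hball : ∀ y ∈ s, b < y := by
          intro y hy
          rcases Finset.mem_insert.mp (hs hy) with rfl | hy'
          · exact hab'
          · exact hlt y hy'
        rw [← eProd_insert hball]
        refine Submodule.subset_span ⟨insert b s, ?_, rfl⟩
        intro y hy
        rcases Finset.mem_insert.mp hy with rfl | hy'
        · exact Finset.mem_insert_of_mem hb
        · rcases Finset.mem_insert.mp (hs hy') with rfl | hy''
          · exact Finset.mem_insert_self _ _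
          · exact Finset.mem_insert_of_mem (Finset.mem_of_mem_erase hy'')

/-- The ordered products span the whole Clifford algebra. -/
lemma espan_top (hQ : DiagQ Q) :
    Submodule.span ℝ {x : CliffordAlgebra Q | ∃ s : Finset (Fin n), x = eProd Q s} = ⊤ := by
  set E := Submodule.span ℝ {x : CliffordAlgebra Q | ∃ s : Finset (Fin n), x = eProd Q s}
    with hE
  have h1 : (1 : CliffordAlgebra Q) ∈ E :=
    Submodule.subset_span ⟨∅, eProd_empty.symm⟩
  have hι : ∀ (m : Fin n → ℝ), ι Q m = ∑ a, m a • egen Q a := by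
    intro m
    have : m = ∑ a, m a • (Pi.single a (1 : ℝ) : Fin n → ℝ) := by
      conv_lhs => rw [← Finset.univ_sum_single m]
      refine Finset.sum_congr rfl fun a _ => ?_
      rw [← Pi.single_smul, smul_eq_mul, mul_one]
    conv_lhs => rw [this]
    simp [egen]
  have hιE : ∀ (m : Fin n → ℝ) (y : CliffordAlgebra Q), y ∈ E → ι Q m * y ∈ E := by
    intro m y hy
    refine Submodule.span_induction (p := fun y _ => ι Q m * y ∈ E) ?_ (by simp)
      (fun a b _ _ ha hb => by simp only [mul_add]; exact add_mem ha hb)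
      (fun c x _ hx => by simp only [mul_smul_comm]; exact Submodule.smul_mem _ _ hx) hy
    rintro x ⟨t, rfl⟩
    rw [hι m, Finset.sum_mul]
    refine Submodule.sum_mem _ (fun a _ => ?_)
    rw [smul_mul_assoc]
    refine Submodule.smul_mem _ _ ?_
    refine Submodule.span_le.mpr ?_ (egen_mul_eProd_mem hQ t.card t rfl a)
    rintro x ⟨s, _, rfl⟩
    exact Submodule.subset_span ⟨s, rfl⟩
  have key : ∀ x : CliffordAlgebra Q, ∀ y ∈ E, x * y ∈ E := by
    intro x
    induction x using CliffordAlgebra.induction with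
    | algebraMap r =>
      intro y hy
      rw [← Algebra.smul_def]
      exact Submodule.smul_mem _ _ hy
    | ι m => exact fun y hy => hιE m y hy
    | mul x₁ x₂ hx₁ hx₂ =>
      intro y hy
      rw [mul_assoc]
      exact hx₁ _ (hx₂ y hy)
    | add x₁ x₂ hx₁ hx₂ =>
      intro y hy
      rw [add_mul]
      exact add_mem (hx₁ y hy) (hx₂ y hy)
  refine eq_top_iff.mpr (fun x _ => ?_)
  simpa using key x 1 h1

lemma grade1_eq_range : gradeSubmodule Q 1 = LinearMap.range (ι Q) := by
  apply le_antisymm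
  · refine Submodule.span_le.mpr ?_
    rintro x ⟨s, hs, rfl⟩
    obtain ⟨a, rfl⟩ := Finset.card_eq_one.mp hs
    rw [eProd_singleton]
    exact ⟨Pi.single a 1, rfl⟩
  · rintro x ⟨m, rfl⟩
    have : m = ∑ a, m a • (Pi.single a (1 : ℝ) : Fin n → ℝ) := by
      conv_lhs => rw [← Finset.univ_sum_single m]
      refine Finset.sum_congr rfl fun a _ => ?_
      rw [← Pi.single_smul, smul_eq_mul, mul_one]
    rw [show ι Q m = ι Q (∑ a, m a • (Pi.single a (1 : ℝ) : Fin n → ℝ)) from congrArg _ this,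
      map_sum]
    refine Submodule.sum_mem _ (fun a _ => ?_)
    rw [map_smul]
    refine Submodule.smul_mem _ _ (Submodule.subset_span ⟨{a}, Finset.card_singleton a, ?_⟩)
    rw [eProd_singleton]; rfl

lemma evenOdd_zero_one {x : CliffordAlgebra Q} (h0 : x ∈ evenOdd Q 0)
    (h1 : x ∈ evenOdd Q 1) : x = 0 :=
  (DirectSum.decompose_of_mem_same (evenOdd Q) h1).symm.trans
    (DirectSum.decompose_of_mem_ne (evenOdd Q) h0 (by decide : (0 : ZMod 2) ≠ 1))

end Stmt18Aux

open Stmt18Aux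

/-- `A ⊆ Γ` for `n ≤ 3`: if `reverse(T) * T` is an invertible central element, then
conjugation by `T` preserves `C^1`. -/
theorem stmt18 (hQ : DiagQ Q) (hn : n ≤ 3) (T : (CliffordAlgebra Q)ˣ)
    (hc : reverse (Q := Q) (↑T : CliffordAlgebra Q) * ↑T ∈
      Subalgebra.center ℝ (CliffordAlgebra Q)) :
    ∀ U ∈ gradeSubmodule Q 1,
      (↑T : CliffordAlgebra Q) * U * (↑T⁻¹ : CliffordAlgebra Q) ∈ gradeSubmodule Q 1 := by
  intro U hU
  obtain ⟨m, hm⟩ : U ∈ LinearMap.range (ι Q) := grade1_eq_range ▸ hU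
  set Tv : CliffordAlgebra Q := ↑T with hTv
  set Ti : CliffordAlgebra Q := ↑T⁻¹ with hTi
  have hTiT : Ti * Tv = 1 := T.inv_mul
  have hTTi : Tv * Ti = 1 := T.mul_inv
  set M : CliffordAlgebra Q := Tv * U * Ti with hM
  -- the reverse of T as a unit
  have hrev_unit : reverse (Q := Q) Tv * reverse (Q := Q) Ti = 1 := by
    rw [← reverse.map_mul, hTiT, reverse.map_one]
  have hrev_unit' : reverse (Q := Q) Ti * reverse (Q := Q) Tv = 1 := by
    rw [← reverse.map_mul, hTTi, reverse.map_one]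
  set z : CliffordAlgebra Q := reverse (Q := Q) Tv * Tv with hz
  set zi : CliffordAlgebra Q := Ti * reverse (Q := Q) Ti with hzi
  have hzzi : z * zi = 1 := by
    rw [hz, hzi, mul_assoc, ← mul_assoc Tv Ti, hTTi, one_mul, hrev_unit]
  have hziz : zi * z = 1 := by
    rw [hz, hzi, mul_assoc, ← mul_assoc (reverse (Q := Q) Ti), hrev_unit', one_mul, hTiT]
  have hcomm : ∀ x, x * z = z * x := Subalgebra.mem_center_iff.mp hc
  have hcommi : ∀ x, x * zi = zi * x := by
    intro x
    calc x * zi = zi * z * (x * zi) := by rw [hziz, one_mul]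
    _ = zi * (z * x * zi) := by rw [mul_assoc zi z (x * zi), ← mul_assoc z x zi]
    _ = zi * (x * z * zi) := by rw [← hcomm x]
    _ = zi * x * (z * zi) := by rw [mul_assoc x z zi, ← mul_assoc zi x (z * zi)]
    _ = zi * x := by rw [hzzi, mul_one]
  have hrevU : reverse (Q := Q) U = U := by rw [← hm]; exact reverse_ι m
  -- reverse T = z * Ti, reverse Ti = Tv * zi
  have hrevT : reverse (Q := Q) Tv = z * Ti := by
    rw [hz, mul_assoc, hTTi, mul_one]
  have hrevTi : reverse (Q := Q) Ti = Tv * zi := by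
    rw [hzi, ← mul_assoc, hTTi, one_mul]
  -- M is reverse-invariant
  have step : Tv * zi * (U * (z * Ti)) = Tv * U * Ti := by
    rw [mul_assoc Tv zi, ← mul_assoc zi U, ← hcommi U, mul_assoc U zi, ← mul_assoc zi z,
      hziz, one_mul, ← mul_assoc]
  have hrevM : reverse (Q := Q) M = M := by
    rw [hM, reverse.map_mul, reverse.map_mul, hrevU, hrevT, hrevTi]
    exact step
  -- decompose M into low (grades ≤ 1) and high (grades ≥ 2) parts
  have hMtop : M ∈ Submodule.span ℝ
      {x : CliffordAlgebra Q | ∃ s : Finset (Fin n), x = eProd Q s} := by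
    rw [espan_top hQ]; trivial
  have hsplit : {x : CliffordAlgebra Q | ∃ s : Finset (Fin n), x = eProd Q s} =
      {x | ∃ s : Finset (Fin n), s.card ≤ 1 ∧ x = eProd Q s} ∪
      {x | ∃ s : Finset (Fin n), 2 ≤ s.card ∧ x = eProd Q s} := by
    ext x
    constructor
    · rintro ⟨s, rfl⟩
      rcases le_or_gt s.card 1 with h | h
      · exact Or.inl ⟨s, h, rfl⟩
      · exact Or.inr ⟨s, h, rfl⟩
    · rintro (⟨s, _, rfl⟩ | ⟨s, _, rfl⟩) <;> exact ⟨s, rfl⟩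
  rw [hsplit, Submodule.span_union] at hMtop
  obtain ⟨y, hy, w, hw, hyw⟩ := Submodule.mem_sup.mp hMtop
  -- reverse fixes the low part and negates the high part
  have hrevy : reverse (Q := Q) y = y := by
    refine Submodule.span_induction (p := fun x _ => reverse (Q := Q) x = x) ?_ (by simp)
      (fun a b _ _ ha hb => by simp only [map_add]; rw [ha, hb])
      (fun c x _ hx => by simp only [map_smul]; rw [hx]) hy
    rintro x ⟨s, hs, rfl⟩
    rw [reverse_eProd hQ]
    interval_cases h : s.card <;> simp
  have hrevw : reverse (Q := Q) w = -w := by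
    refine Submodule.span_induction (p := fun x _ => reverse (Q := Q) x = -x) ?_ (by simp)
      (fun a b _ _ ha hb => by simp only [map_add]; rw [ha, hb, neg_add])
      (fun c x _ hx => by simp only [map_smul]; rw [hx, smul_neg]) hw
    rintro x ⟨s, hs, rfl⟩
    have hcard : s.card ≤ 3 := by
      have := Finset.card_le_univ s
      simp only [Finset.card_univ, Fintype.card_fin] at this
      omega
    rw [reverse_eProd hQ]
    interval_cases h : s.card
    · norm_num [Nat.choose]
    · norm_num [Nat.choose]
  -- conclude w = 0
  have hw0 : w = 0 := by
    have h1 : y + -w = y + w := by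
      conv_rhs => rw [hyw, ← hrevM, ← hyw]
      rw [map_add, hrevy, hrevw]
    have h2 : -w = w := add_left_cancel h1
    have h3 : (2 : ℝ) • w = 0 := by
      rw [two_smul]
      exact add_eq_zero_iff_eq_neg.mpr h2.symm
    rcases smul_eq_zero.mp h3 with h | h
    · norm_num at h
    · exact h
  have hMy : M = y := by rw [← hyw, hw0, add_zero]
  -- split the low part into grade 0 and grade 1
  have hsplit2 : {x : CliffordAlgebra Q | ∃ s : Finset (Fin n), s.card ≤ 1 ∧ x = eProd Q s} =
      {x | ∃ s : Finset (Fin n), s.card = 0 ∧ x = eProd Q s} ∪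
      {x | ∃ s : Finset (Fin n), s.card = 1 ∧ x = eProd Q s} := by
    ext x
    constructor
    · rintro ⟨s, hs, rfl⟩
      rcases Nat.le_one_iff_eq_zero_or_eq_one.mp hs with h | h
      · exact Or.inl ⟨s, h, rfl⟩
      · exact Or.inr ⟨s, h, rfl⟩
    · rintro (⟨s, hs, rfl⟩ | ⟨s, hs, rfl⟩) <;> exact ⟨s, by omega, rfl⟩
  rw [hsplit2, Submodule.span_union] at hy
  obtain ⟨y₀, hy₀, u, hu, hyu⟩ := Submodule.mem_sup.mp hy
  have hu1 : u ∈ gradeSubmodule Q 1 := hu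
  obtain ⟨m', hm'⟩ : u ∈ LinearMap.range (ι Q) := grade1_eq_range ▸ hu1
  -- y₀ is a scalar
  have hset0 : {x : CliffordAlgebra Q | ∃ s : Finset (Fin n), s.card = 0 ∧ x = eProd Q s} =
      {(1 : CliffordAlgebra Q)} := by
    ext x
    constructor
    · rintro ⟨s, hs, rfl⟩
      rw [Finset.card_eq_zero.mp hs, eProd_empty]
      rfl
    · rintro rfl
      exact ⟨∅, Finset.card_empty, eProd_empty.symm⟩
  rw [hset0] at hy₀
  obtain ⟨c, hc0⟩ := Submodule.mem_span_singleton.mp hy₀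
  -- now M = c • 1 + ι m'
  have hMeq : M = c • 1 + ι Q m' := by rw [hMy, ← hyu, ← hc0, hm']
  -- M² is a scalar
  have hMsq : M * M = Q m • (1 : CliffordAlgebra Q) := by
    rw [hM]
    calc Tv * U * Ti * (Tv * U * Ti) = Tv * U * (Ti * Tv) * U * Ti := by
          simp only [mul_assoc]
    _ = Tv * (U * U) * Ti := by rw [hTiT, mul_one]; simp only [mul_assoc]
    _ = Tv * (algebraMap ℝ _ (Q m)) * Ti := by rw [← hm, ι_sq_scalar]
    _ = Q m • (Tv * Ti) := by
          rw [← Algebra.commutes, mul_assoc, ← Algebra.smul_def]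
    _ = Q m • (1 : CliffordAlgebra Q) := by rw [hTTi]
  -- expand the other side
  have hexp : M * M = (c * c + Q m') • (1 : CliffordAlgebra Q) + (2 * c) • ι Q m' := by
    rw [hMeq]
    have : ι Q m' * ι Q m' = Q m' • (1 : CliffordAlgebra Q) := by
      rw [ι_sq_scalar, Algebra.smul_def, mul_one]
    rw [add_mul, mul_add, mul_add, this]
    simp only [smul_mul_assoc, mul_smul_comm, smul_smul, one_mul, mul_one]
    module
  have hkey : (2 * c) • ι Q m' = (Q m - (c * c + Q m')) • (1 : CliffordAlgebra Q) := by
    have := hMsq.symm.trans hexp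
    rw [sub_smul]
    rw [eq_sub_iff_add_eq, add_comm]
    exact this.symm
  -- the two sides live in different grades, hence vanish
  have hzero : (2 * c) • ι Q m' = 0 := by
    refine evenOdd_zero_one (Q := Q) ?_ ?_
    · rw [hkey, ← Algebra.algebraMap_eq_smul_one]
      exact SetLike.algebraMap_mem_graded (evenOdd Q) _
    · exact Submodule.smul_mem _ _ (ι_mem_evenOdd_one Q m')
  rcases eq_or_ne c 0 with rfl | hcne
  · have : M = ι Q m' := by rw [hMeq, zero_smul, zero_add]
    rw [grade1_eq_range]
    exact ⟨m', this.symm⟩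
  · have hι0 : ι Q m' = 0 := by
      rcases smul_eq_zero.mp hzero with h | h
      · exact absurd h (by simpa using hcne)
      · exact h
    have hMc : M = c • 1 := by rw [hMeq, hι0, add_zero]
    have hUc : U = c • 1 := by
      have : Ti * M * Tv = U := by
        rw [hM]
        calc Ti * (Tv * U * Ti) * Tv = (Ti * Tv) * U * (Ti * Tv) := by
              simp only [mul_assoc]
        _ = U := by rw [hTiT, one_mul, mul_one]
      rw [← this, hMc, mul_smul_comm, smul_mul_assoc, mul_one, hTiT]
    have hU0 : U = 0 := by
      refine evenOdd_zero_one (Q := Q) ?_ ?_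
      · rw [hUc, ← Algebra.algebraMap_eq_smul_one]
        exact SetLike.algebraMap_mem_graded (evenOdd Q) _
      · rw [← hm]; exact ι_mem_evenOdd_one Q m
    have : M = 0 := by rw [hM, hU0, mul_zero, zero_mul]
    rw [this]
    exact Submodule.zero_mem _
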